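/- Let K be a commutative semiring and π : Lit_A → K a K-interpretation such that for every literal L ∈ Lit_A at least one of π(L) and π(¬L) is 0. Then there exists no first-order sentence φ for which both π⟦φ⟧ ≠ 0 and π⟦¬φ⟧ ≠ 0. -/

import Mathlib

/-- A finite relational vocabulary: a type of relation symbols with arities. -/
structure Vocab : Type 1 where
  Rel : Type
  arity : Rel → ℕ

/-- First-order formulas over a relational vocabulary `𝒱` (with equality),
with variables from `Vars`.  Negated atoms are included as primitive literals. -/
inductive Formula (𝒱 : Vocab) (Vars : Type) : Type where
  | rel    : (R : 𝒱.Rel) → (Fin (𝒱.arity R) → Vars) → Formula 𝒱 Vars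
  | nrel   : (R : 𝒱.Rel) → (Fin (𝒱.arity R) → Vars) → Formula 𝒱 Vars
  | equal  : Vars → Vars → Formula 𝒱 Vars
  | nequal : Vars → Vars → Formula 𝒱 Vars
  | and    : Formula 𝒱 Vars → Formula 𝒱 Vars → Formula 𝒱 Vars
  | or     : Formula 𝒱 Vars → Formula 𝒱 Vars → Formula 𝒱 Vars
  | all    : Vars → Formula 𝒱 Vars → Formula 𝒱 Vars
  | ex     : Vars → Formula 𝒱 Vars → Formula 𝒱 Vars
  | not    : Formula 𝒱 Vars → Formula 𝒱 Vars

/-- A ground literal over vocabulary `𝒱` and universe `A`: a positive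
(`pos = true`) or negated (`pos = false`) ground atom `R(ā)`. -/
structure Lit (𝒱 : Vocab) (A : Type) where
  pos : Bool
  R : 𝒱.Rel
  args : Fin (𝒱.arity R) → A

/-- Negation of a literal (the negation of a literal is again a literal). -/
def Lit.neg {𝒱 : Vocab} {A : Type} (L : Lit 𝒱 A) : Lit 𝒱 A := ⟨!L.pos, L.R, L.args⟩

namespace Formula

variable {𝒱 : Vocab} {Vars : Type}

/-- Size of a formula (used for termination of the semiring semantics). -/
def size : Formula 𝒱 Vars → ℕ
  | rel _ _ => 1
  | nrel _ _ => 1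
  | equal _ _ => 1
  | nequal _ _ => 1
  | and φ ψ => φ.size + ψ.size + 1
  | or φ ψ => φ.size + ψ.size + 1
  | all _ φ => φ.size + 1
  | ex _ φ => φ.size + 1
  | not φ => φ.size + 1

mutual
/-- Negation normal form of a formula. -/
def nnf : Formula 𝒱 Vars → Formula 𝒱 Vars
  | rel R v => rel R v
  | nrel R v => nrel R v
  | equal x y => equal x y
  | nequal x y => nequal x y
  | and φ ψ => and φ.nnf ψ.nnf
  | or φ ψ => or φ.nnf ψ.nnf
  | all x φ => all x φ.nnf
  | ex x φ => ex x φ.nnf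
  | not φ => nnfNeg φ

/-- Negation normal form of the negation of a formula: `nnfNeg φ = nnf (¬φ)`. -/
def nnfNeg : Formula 𝒱 Vars → Formula 𝒱 Vars
  | rel R v => nrel R v
  | nrel R v => rel R v
  | equal x y => nequal x y
  | nequal x y => equal x y
  | and φ ψ => or (nnfNeg φ) (nnfNeg ψ)
  | or φ ψ => and (nnfNeg φ) (nnfNeg ψ)
  | all x φ => ex x (nnfNeg φ)
  | ex x φ => all x (nnfNeg φ)
  | not φ => nnf φ
end

theorem size_nnf_le (φ : Formula 𝒱 Vars) : φ.nnf.size ≤ φ.size ∧ (nnfNeg φ).size ≤ φ.size := by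
  induction φ <;> simp_all [nnf, nnfNeg, size] <;> omega

/-- Free variables of a formula. -/
def FV [DecidableEq Vars] : Formula 𝒱 Vars → Finset Vars
  | rel _ v => Finset.image v Finset.univ
  | nrel _ v => Finset.image v Finset.univ
  | equal x y => {x, y}
  | nequal x y => {x, y}
  | and φ ψ => φ.FV ∪ ψ.FV
  | or φ ψ => φ.FV ∪ ψ.FV
  | all x φ => φ.FV.erase x
  | ex x φ => φ.FV.erase x
  | not φ => φ.FV

end Formula

section Semantics

variable {𝒱 : Vocab} {Vars A K : Type} [DecidableEq Vars] [Fintype A] [DecidableEq A]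
  [CommSemiring K]

/-- The extension of a `K`-interpretation `π : Lit 𝒱 A → K` to first-order formulas,
relative to a valuation `ν : Vars → A`:  `eval π φ ν = π⟦φ⟧ν`. -/
def eval (π : Lit 𝒱 A → K) : Formula 𝒱 Vars → (Vars → A) → K
  | .rel R v, ν => π ⟨true, R, fun i => ν (v i)⟩
  | .nrel R v, ν => π ⟨false, R, fun i => ν (v i)⟩
  | .equal x y, ν => if ν x = ν y then 1 else 0
  | .nequal x y, ν => if ν x ≠ ν y then 1 else 0
  | .and φ ψ, ν => eval π φ ν * eval π ψ ν
  | .or φ ψ, ν => eval π φ ν + eval π ψ ν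
  | .all x φ, ν => ∏ a : A, eval π φ (Function.update ν x a)
  | .ex x φ, ν => ∑ a : A, eval π φ (Function.update ν x a)
  | .not φ, ν => eval π (Formula.nnfNeg φ) ν
termination_by φ _ => φ.size
decreasing_by
  all_goals simp [Formula.size]
  all_goals first
    | omega
    | exact Nat.lt_succ_of_le (Formula.size_nnf_le _).2
    | exact (Formula.size_nnf_le _).2

end Semantics

/-- A `𝒱`-structure with universe `A`: an interpretation of each relation symbol. -/
def Struc (𝒱 : Vocab) (A : Type) := (R : 𝒱.Rel) → (Fin (𝒱.arity R) → A) → Prop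

/-- Standard (Tarski) satisfaction of a literal in a structure. -/
def Struc.SatLit {𝒱 : Vocab} {A : Type} (𝔄 : Struc 𝒱 A) (L : Lit 𝒱 A) : Prop :=
  if L.pos then 𝔄 L.R L.args else ¬ 𝔄 L.R L.args

section Sat

variable {𝒱 : Vocab} {Vars A : Type} [DecidableEq Vars]

/-- Standard (Tarski) satisfaction relation `𝔄 ⊨ φ[ν]`. -/
def Sat (𝔄 : Struc 𝒱 A) : Formula 𝒱 Vars → (Vars → A) → Prop
  | .rel R v, ν => 𝔄 R (fun i => ν (v i))
  | .nrel R v, ν => ¬ 𝔄 R (fun i => ν (v i))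
  | .equal x y, ν => ν x = ν y
  | .nequal x y, ν => ν x ≠ ν y
  | .and φ ψ, ν => Sat 𝔄 φ ν ∧ Sat 𝔄 ψ ν
  | .or φ ψ, ν => Sat 𝔄 φ ν ∨ Sat 𝔄 ψ ν
  | .all x φ, ν => ∀ a : A, Sat 𝔄 φ (Function.update ν x a)
  | .ex x φ, ν => ∃ a : A, Sat 𝔄 φ (Function.update ν x a)
  | .not φ, ν => ¬ Sat 𝔄 φ ν

end Sat

section ModelDefining

variable {𝒱 : Vocab} {A K : Type} [CommSemiring K]

/-- A `K`-interpretation is model-defining if for each fact exactly one of the values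
assigned to it and to its negation is `0`. -/
def ModelDefining (π : Lit 𝒱 A → K) : Prop :=
  ∀ L : Lit 𝒱 A, (π L = 0 ∧ π L.neg ≠ 0) ∨ (π L ≠ 0 ∧ π L.neg = 0)

/-- The structure `𝔄_π` defined by a model-defining interpretation `π`:
it satisfies a literal `L` iff `π L ≠ 0`. -/
def StrucOf (π : Lit 𝒱 A → K) : Struc 𝒱 A := fun R a => π ⟨true, R, a⟩ ≠ 0

end ModelDefining

/-- A commutative semiring is positive if it is `+`-positive and has no divisors of zero. -/
def IsPositive (K : Type) [CommSemiring K] : Prop :=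
  (∀ a b : K, a + b = 0 → a = 0 ∧ b = 0) ∧ ∀ a b : K, a * b = 0 → a = 0 ∨ b = 0


section Aux

variable {𝒱 : Vocab} {Vars A K : Type} [DecidableEq Vars]
  [Fintype A] [DecidableEq A] [CommSemiring K]

lemma eval_nnf_aux (π : Lit 𝒱 A → K) :
    ∀ n (φ : Formula 𝒱 Vars), φ.size ≤ n → ∀ ν, eval π φ.nnf ν = eval π φ ν := by
  intro n
  induction n with
  | zero => intro φ h; cases φ <;> simp [Formula.size] at h
  | succ n ih =>
    intro φ h ν
    cases φ with
    | rel R v => rfl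
    | nrel R v => rfl
    | equal x y => rfl
    | nequal x y => rfl
    | and φ ψ =>
      simp only [Formula.size] at h
      simp only [Formula.nnf, eval]
      rw [ih φ (by omega), ih ψ (by omega)]
    | or φ ψ =>
      simp only [Formula.size] at h
      simp only [Formula.nnf, eval]
      rw [ih φ (by omega), ih ψ (by omega)]
    | all x φ =>
      simp only [Formula.size] at h
      simp only [Formula.nnf, eval]
      exact Finset.prod_congr rfl fun a _ => ih φ (by omega) _
    | ex x φ =>
      simp only [Formula.size] at h
      simp only [Formula.nnf, eval]
      exact Finset.sum_congr rfl fun a _ => ih φ (by omega) _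
    | not φ =>
      simp only [Formula.nnf, eval]

lemma eval_nnf (π : Lit 𝒱 A → K) (φ : Formula 𝒱 Vars) (ν : Vars → A) :
    eval π φ.nnf ν = eval π φ ν :=
  eval_nnf_aux π φ.size φ le_rfl ν

lemma key_aux (π : Lit 𝒱 A → K) (hπ : ∀ L : Lit 𝒱 A, π L = 0 ∨ π L.neg = 0) :
    ∀ n (φ : Formula 𝒱 Vars), φ.size ≤ n → ∀ ν,
      (eval π φ ν ≠ 0 → Sat (StrucOf π) φ ν) ∧
      (eval π (Formula.nnfNeg φ) ν ≠ 0 → ¬ Sat (StrucOf π) φ ν) := by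
  intro n
  induction n with
  | zero => intro φ h; cases φ <;> simp [Formula.size] at h
  | succ n ih =>
    intro φ h ν
    cases φ with
    | rel R v =>
      simp only [eval, Formula.nnfNeg, Sat, StrucOf]
      constructor
      · intro h0
        exact h0
      · intro h0 hs
        rcases hπ ⟨true, R, fun i => ν (v i)⟩ with h1 | h1
        · exact hs h1
        · exact h0 h1
    | nrel R v =>
      simp only [eval, Formula.nnfNeg, Sat, StrucOf]
      constructor
      · intro h0 hs
        rcases hπ ⟨true, R, fun i => ν (v i)⟩ with h1 | h1
        · exact hs h1
        · exact h0 h1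
      · intro h0
        exact not_not_intro h0
    | equal x y =>
      simp only [eval, Formula.nnfNeg, Sat]
      constructor
      · intro h0
        by_contra hne
        rw [if_neg hne] at h0
        exact h0 rfl
      · intro h0 hs
        rw [if_neg (not_not_intro hs)] at h0
        exact h0 rfl
    | nequal x y =>
      simp only [eval, Formula.nnfNeg, Sat]
      constructor
      · intro h0
        by_contra hne
        rw [if_neg (fun hn : ν x ≠ ν y => hn hne)] at h0
        exact h0 rfl
      · intro h0 hs
        rw [if_neg hs] at h0
        exact h0 rfl
    | and φ ψ =>
      simp only [Formula.size] at h
      constructor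
      · intro h0
        have h1 : eval π φ ν ≠ 0 := fun hz => h0 (by simp [eval, hz])
        have h2 : eval π ψ ν ≠ 0 := fun hz => h0 (by simp [eval, hz])
        exact ⟨(ih φ (by omega) ν).1 h1, (ih ψ (by omega) ν).1 h2⟩
      · intro h0 hs
        simp only [Formula.nnfNeg, eval] at h0
        rcases hs with ⟨hs1, hs2⟩
        have h1 : eval π (Formula.nnfNeg φ) ν = 0 := by
          by_contra hne; exact (ih φ (by omega) ν).2 hne hs1
        have h2 : eval π (Formula.nnfNeg ψ) ν = 0 := by
          by_contra hne; exact (ih ψ (by omega) ν).2 hne hs2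
        rw [h1, h2, add_zero] at h0
        exact h0 rfl
    | or φ ψ =>
      simp only [Formula.size] at h
      constructor
      · intro h0
        by_contra hs
        rw [Sat] at hs
        push_neg at hs
        have h1 : eval π φ ν = 0 := by
          by_contra hne; exact hs.1 ((ih φ (by omega) ν).1 hne)
        have h2 : eval π ψ ν = 0 := by
          by_contra hne; exact hs.2 ((ih ψ (by omega) ν).1 hne)
        exact h0 (by simp [eval, h1, h2])
      · intro h0 hs
        simp only [Formula.nnfNeg, eval] at h0
        have h1 : eval π (Formula.nnfNeg φ) ν ≠ 0 := fun hz => h0 (by rw [hz, zero_mul])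
        have h2 : eval π (Formula.nnfNeg ψ) ν ≠ 0 := fun hz => h0 (by rw [hz, mul_zero])
        rcases hs with hs | hs
        · exact (ih φ (by omega) ν).2 h1 hs
        · exact (ih ψ (by omega) ν).2 h2 hs
    | all x φ =>
      simp only [Formula.size] at h
      constructor
      · intro h0 a
        have h1 : eval π φ (Function.update ν x a) ≠ 0 := by
          intro hz
          exact h0 (by simp [eval]; exact Finset.prod_eq_zero (Finset.mem_univ a) hz)
        exact (ih φ (by omega) _).1 h1
      · intro h0 hs
        simp only [Formula.nnfNeg, eval] at h0
        obtain ⟨a, _, ha⟩ := Finset.exists_ne_zero_of_sum_ne_zero h0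
        exact (ih φ (by omega) _).2 ha (hs a)
    | ex x φ =>
      simp only [Formula.size] at h
      constructor
      · intro h0
        rw [eval] at h0
        obtain ⟨a, _, ha⟩ := Finset.exists_ne_zero_of_sum_ne_zero h0
        exact ⟨a, (ih φ (by omega) _).1 ha⟩
      · intro h0 hs
        obtain ⟨a, ha⟩ := hs
        simp only [Formula.nnfNeg, eval] at h0
        have h1 : eval π (Formula.nnfNeg φ) (Function.update ν x a) ≠ 0 := by
          intro hz
          exact h0 (Finset.prod_eq_zero (Finset.mem_univ a) hz)
        exact (ih φ (by omega) _).2 h1 ha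
    | not φ =>
      simp only [Formula.size] at h
      constructor
      · intro h0
        rw [eval] at h0
        exact (ih φ (by omega) ν).2 h0
      · intro h0
        simp only [Formula.nnfNeg] at h0
        rw [eval_nnf] at h0
        exact not_not_intro ((ih φ (by omega) ν).1 h0)

end Aux

/-- "consistency": if for every literal `L` at least one of `π(L)` and
`π(¬L)` is `0`, then there is no sentence `φ` with both `π⟦φ⟧ ≠ 0` and `π⟦¬φ⟧ ≠ 0`. -/
theorem no_inconsistent_sentence {𝒱 : Vocab} {Vars A K : Type} [DecidableEq Vars]
    [Fintype A] [DecidableEq A] [Nonempty A] [CommSemiring K]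
    (π : Lit 𝒱 A → K) (hπ : ∀ L : Lit 𝒱 A, π L = 0 ∨ π L.neg = 0) :
    ¬ ∃ (φ : Formula 𝒱 Vars) (_ : φ.FV = ∅) (ν : Vars → A),
        eval π φ ν ≠ 0 ∧ eval π (Formula.not φ) ν ≠ 0 := by
  rintro ⟨φ, -, ν, h1, h2⟩
  rw [eval] at h2
  exact (key_aux π hπ φ.size φ le_rfl ν).2 h2 ((key_aux π hπ φ.size φ le_rfl ν).1 h1)
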